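/- Equivariance of nominal equality: if ∇ ⊢ t₁ ≈ t₂ then ∇ ⊢ π • t₁ ≈ π • t₂ for any permutation π. -/
import Mathlib


abbrev Atom := ℕ
abbrev Var := ℕ
abbrev Perm := List (Atom × Atom)

def swap (p : Atom × Atom) (a : Atom) : Atom :=
  if a = p.1 then p.2 else if a = p.2 then p.1 else a

def permAtom : Perm → Atom → Atom
  | [], a => a
  | p :: π, a => swap p (permAtom π a)

def ds (π π' : Perm) : Set Atom := {a | permAtom π a ≠ permAtom π' a}

inductive Trm : Type
  | unit : Trm
  | pair : Trm → Trm → Trm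
  | fn : ℕ → Trm → Trm
  | atom : Atom → Trm
  | abs : Atom → Trm → Trm
  | susp : Perm → Var → Trm

def permTrm (π : Perm) : Trm → Trm
  | .unit => .unit
  | .pair t₁ t₂ => .pair (permTrm π t₁) (permTrm π t₂)
  | .fn f t => .fn f (permTrm π t)
  | .atom a => .atom (permAtom π a)
  | .abs a t => .abs (permAtom π a) (permTrm π t)
  | .susp π' X => .susp (π ++ π') X

abbrev Env := Set (Atom × Var)

inductive fresh (Γ : Env) (a : Atom) : Trm → Prop
  | unit : fresh Γ a .unit
  | pair {t₁ t₂} : fresh Γ a t₁ → fresh Γ a t₂ → fresh Γ a (.pair t₁ t₂)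
  | fn {f t} : fresh Γ a t → fresh Γ a (.fn f t)
  | abs₁ {t} : fresh Γ a (.abs a t)
  | abs₂ {b t} : a ≠ b → fresh Γ a t → fresh Γ a (.abs b t)
  | atom {b} : a ≠ b → fresh Γ a (.atom b)
  | susp {π X} : (permAtom π.reverse a, X) ∈ Γ → fresh Γ a (.susp π X)

inductive equ (Γ : Env) : Trm → Trm → Prop
  | unit : equ Γ .unit .unit
  | pair {t₁ t₂ s₁ s₂} : equ Γ t₁ t₂ → equ Γ s₁ s₂ → equ Γ (.pair t₁ s₁) (.pair t₂ s₂)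
  | fn {f t₁ t₂} : equ Γ t₁ t₂ → equ Γ (.fn f t₁) (.fn f t₂)
  | abs₁ {a t₁ t₂} : equ Γ t₁ t₂ → equ Γ (.abs a t₁) (.abs a t₂)
  | abs₂ {a b t₁ t₂} : a ≠ b → fresh Γ a t₂ → equ Γ t₁ (permTrm [(a, b)] t₂) →
      equ Γ (.abs a t₁) (.abs b t₂)
  | atom {a} : equ Γ (.atom a) (.atom a)
  | susp {π π' X} : (∀ c ∈ ds π π', (c, X) ∈ Γ) → equ Γ (.susp π X) (.susp π' X)

inductive weak : Trm → Trm → Prop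
  | unit : weak .unit .unit
  | atom {a} : weak (.atom a) (.atom a)
  | fn {f t t'} : weak t t' → weak (.fn f t) (.fn f t')
  | pair {t₁ t₂ s₁ s₂} : weak t₁ s₁ → weak t₂ s₂ → weak (.pair t₁ t₂) (.pair s₁ s₂)
  | abs {a t t'} : weak t t' → weak (.abs a t) (.abs a t')
  | susp {π π' X} : ds π π' = ∅ → weak (.susp π X) (.susp π' X)

def subst (σ : Var → Option Trm) : Trm → Trm
  | .unit => .unit
  | .pair t₁ t₂ => .pair (subst σ t₁) (subst σ t₂)
  | .fn f t => .fn f (subst σ t)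
  | .atom a => .atom a
  | .abs a t => .abs a (subst σ t)
  | .susp π X =>
      match σ X with
      | some t => permTrm π t
      | none => .susp π X

lemma swap_swap (p : Atom × Atom) (a : Atom) : swap p (swap p a) = a := by
  unfold swap; rcases p with ⟨x,y⟩; dsimp only
  by_cases h1 : a = x <;> by_cases h2 : a = y <;> simp [h1, h2]

lemma permAtom_append (l l' : Perm) (a : Atom) :
    permAtom (l ++ l') a = permAtom l (permAtom l' a) := by
  induction l with
  | nil => rfl
  | cons p l ih => simp [permAtom, ih]

lemma permAtom_reverse_left (π : Perm) (a : Atom) :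
    permAtom π.reverse (permAtom π a) = a := by
  induction π with
  | nil => rfl
  | cons p π ih =>
    simp [permAtom, List.reverse_cons, permAtom_append, swap_swap, ih]

lemma permAtom_reverse_right (π : Perm) (a : Atom) :
    permAtom π (permAtom π.reverse a) = a := by
  have := permAtom_reverse_left π.reverse a
  simpa using this

lemma permAtom_inj (π : Perm) {a b : Atom} (h : permAtom π a = permAtom π b) : a = b := by
  have := congrArg (permAtom π.reverse) h
  simpa [permAtom_reverse_left] using this

lemma permTrm_append (l l' : Perm) (t : Trm) :
    permTrm (l ++ l') t = permTrm l (permTrm l' t) := by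
  induction t with
  | unit => rfl
  | pair t₁ t₂ ih₁ ih₂ => simp [permTrm, ih₁, ih₂]
  | fn f t ih => simp [permTrm, ih]
  | atom a => simp [permTrm, permAtom_append]
  | abs a t ih => simp [permTrm, permAtom_append, ih]
  | susp π X => simp [permTrm]

lemma fresh_equivariant {Γ : Env} {a : Atom} {t : Trm} (π : Perm)
    (h : fresh Γ a t) : fresh Γ (permAtom π a) (permTrm π t) := by
  induction h with
  | unit => exact fresh.unit
  | pair _ _ ih₁ ih₂ => exact fresh.pair ih₁ ih₂
  | fn _ ih => exact fresh.fn ih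
  | abs₁ => exact fresh.abs₁
  | abs₂ hne _ ih => exact fresh.abs₂ (fun h => hne (permAtom_inj π h)) ih
  | atom hne => exact fresh.atom (fun h => hne (permAtom_inj π h))
  | susp hmem =>
    apply fresh.susp
    rename_i ρ X
    have : permAtom (π ++ ρ).reverse (permAtom π a) = permAtom ρ.reverse a := by
      simp [List.reverse_append, permAtom_append, permAtom_reverse_left]
    rw [this]; exact hmem

-- weak is equivariant
lemma weak_equivariant {t t' : Trm} (π : Perm) (h : weak t t') :
    weak (permTrm π t) (permTrm π t') := by
  induction h with
  | unit => exact weak.unit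
  | atom => exact weak.atom
  | fn _ ih => exact weak.fn ih
  | pair _ _ ih₁ ih₂ => exact weak.pair ih₁ ih₂
  | abs _ ih => exact weak.abs ih
  | susp hds =>
    apply weak.susp
    rename_i ρ ρ' X
    ext c
    simp only [ds, Set.mem_setOf_eq, Set.mem_empty_iff_false, iff_false, not_not,
      permAtom_append]
    congr 1
    by_contra hne
    exact (Set.eq_empty_iff_forall_notMem.mp hds c) hne

lemma same_action_ds_empty {π π' : Perm} (h : ∀ a, permAtom π a = permAtom π' a) :
    ds π π' = ∅ := by
  ext c; simp [ds, h c]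

-- if two permutations have the same action, the results of acting are `weak`-related
lemma weak_of_same_action (π π' : Perm) (h : ∀ a, permAtom π a = permAtom π' a)
    (t : Trm) : weak (permTrm π t) (permTrm π' t) := by
  induction t with
  | unit => exact weak.unit
  | pair t₁ t₂ ih₁ ih₂ => exact weak.pair ih₁ ih₂
  | fn f t ih => exact weak.fn ih
  | atom a => rw [show permTrm π (.atom a) = .atom (permAtom π a) from rfl, h a]; exact weak.atom
  | abs a t ih =>
    show weak (.abs (permAtom π a) _) (.abs (permAtom π' a) _)
    rw [h a]; exact weak.abs ih
  | susp ρ X =>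
    apply weak.susp
    apply same_action_ds_empty
    intro a; simp [permAtom_append, h]

lemma fresh_weak {Γ : Env} {a : Atom} {t t' : Trm} (h : fresh Γ a t) (hw : weak t t') :
    fresh Γ a t' := by
  induction hw generalizing a with
  | unit => exact h
  | atom => exact h
  | fn _ ih => cases h with | fn h => exact fresh.fn (ih h)
  | pair _ _ ih₁ ih₂ => cases h with | pair h₁ h₂ => exact fresh.pair (ih₁ h₁) (ih₂ h₂)
  | abs _ ih =>
    cases h with
    | abs₁ => exact fresh.abs₁
    | abs₂ hne h => exact fresh.abs₂ hne (ih h)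
  | susp hds =>
    cases h with
    | susp hmem =>
      rename_i ρ ρ' X
      apply fresh.susp
      have hact : ∀ c, permAtom ρ c = permAtom ρ' c := by
        intro c; by_contra hne
        exact (Set.eq_empty_iff_forall_notMem.mp hds c) hne
      have : permAtom ρ'.reverse a = permAtom ρ.reverse a := by
        apply permAtom_inj ρ'
        rw [permAtom_reverse_right, ← hact, permAtom_reverse_right]
      rw [this]; exact hmem

lemma equ_weak {Γ : Env} {t₁ t₂ t₃ : Trm} (h : equ Γ t₁ t₂) (hw : weak t₂ t₃) :
    equ Γ t₁ t₃ := by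
  induction h generalizing t₃ with
  | unit => cases hw; exact equ.unit
  | pair _ _ ih₁ ih₂ => cases hw with | pair w₁ w₂ => exact equ.pair (ih₁ w₁) (ih₂ w₂)
  | fn _ ih => cases hw with | fn w => exact equ.fn (ih w)
  | abs₁ _ ih => cases hw with | abs w => exact equ.abs₁ (ih w)
  | abs₂ hne hf _ ih =>
    cases hw with
    | abs w =>
      exact equ.abs₂ hne (fresh_weak hf w) (ih (weak_equivariant _ w))
  | atom => cases hw; exact equ.atom
  | susp hmem =>
    cases hw with
    | susp hds =>
      rename_i ρ ρ' X ρ''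
      apply equ.susp
      intro c hc
      apply hmem
      have hact : ∀ a, permAtom ρ' a = permAtom ρ'' a := by
        intro a; by_contra hne
        exact (Set.eq_empty_iff_forall_notMem.mp hds a) hne
      simpa [ds, hact] using hc

theorem equ_equivariant (Γ : Env) (t₁ t₂ : Trm) (π : Perm)
    (h : equ Γ t₁ t₂) : equ Γ (permTrm π t₁) (permTrm π t₂) := by
  induction h with
  | unit => exact equ.unit
  | pair _ _ ih₁ ih₂ => exact equ.pair ih₁ ih₂
  | fn _ ih => exact equ.fn ih
  | abs₁ _ ih => exact equ.abs₁ ih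
  | @abs₂ a b s₁ s₂ hne hf _ ih =>
    apply equ.abs₂ (fun h => hne (permAtom_inj π h)) (fresh_equivariant π hf)
    rw [← permTrm_append] at ih
    have hw : weak (permTrm (π ++ [(a,b)]) s₂)
        (permTrm ([(permAtom π a, permAtom π b)] ++ π) s₂) := by
      apply weak_of_same_action
      intro c
      simp only [permAtom_append, permAtom, List.nil_append]
      unfold swap; dsimp only
      have hne' : permAtom π a ≠ permAtom π b := fun h => hne (permAtom_inj π h)
      by_cases h1 : c = a <;> by_cases h2 : c = b
      · exact absurd (h1 ▸ h2) hne
      · subst h1; simp [hne]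
      · subst h2; simp [hne, Ne.symm hne, hne', hne'.symm]
      · split_ifs with g1 g2
        · exact absurd (permAtom_inj π g1) h1
        · exact absurd (permAtom_inj π g2) h2
        · rfl
    have := equ_weak ih hw
    rwa [permTrm_append] at this
  | atom => exact equ.atom
  | @susp ρ ρ' X hmem =>
    apply equ.susp
    intro c hc
    apply hmem
    simp only [ds, Set.mem_setOf_eq, permAtom_append] at hc ⊢
    exact fun h => hc (congrArg _ h)
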